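/- For any Parseval frame Φ for F^N with M vectors, the equiangular distance satisfies EAD(Φ) = N − N²/M + M(M−1)c²_{M,N} − 2 c_{M,N} TC(Φ), where c_{M,N} = sqrt(N(M−N)/(M²(M−1))). Hence EAD(Φ) is minimized over Parseval frames exactly when the total coherence TC(Φ) is maximized. -/

import Mathlib

open Matrix Finset

noncomputable def totalCoherence {N M : ℕ} (Φ : Matrix (Fin N) (Fin M) ℂ) : ℝ :=
  ∑ i, ∑ j ∈ Finset.univ.erase i, ‖(Φᴴ * Φ) i j‖

/-- The Welch constant. -/
noncomputable def welchConst (N M : ℕ) : ℝ :=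
  Real.sqrt (((N : ℝ) * ((M : ℝ) - (N : ℝ))) / ((M : ℝ) ^ 2 * ((M : ℝ) - 1)))

/-- The equiangular distance of a Parseval frame. -/
noncomputable def EAD {N M : ℕ} (Φ : Matrix (Fin N) (Fin M) ℂ) : ℝ :=
  (∑ i, (((Φᴴ * Φ) i i).re - (N : ℝ) / (M : ℝ)) ^ 2) +
    ∑ i, ∑ j ∈ Finset.univ.erase i, (‖(Φᴴ * Φ) i j‖ - welchConst N M) ^ 2

lemma EAD_eq_aux {N M : ℕ} (hN : 0 < N) (hNM : N < M)
    (Φ : Matrix (Fin N) (Fin M) ℂ) (hΦ : Φ * Φᴴ = 1) :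
    EAD Φ = (N : ℝ) - (N : ℝ) ^ 2 / (M : ℝ) +
        (M : ℝ) * ((M : ℝ) - 1) * (welchConst N M) ^ 2 -
        2 * welchConst N M * totalCoherence Φ := by
  have hMposn : 0 < M := lt_of_le_of_lt (Nat.zero_le N) hNM
  have hM0 : (0:ℝ) < M := by exact_mod_cast hMposn
  have hMne : (M:ℝ) ≠ 0 := ne_of_gt hM0
  set G := Φᴴ * Φ with hG
  have hGmul : G * G = G := by
    rw [hG, Matrix.mul_assoc, ← Matrix.mul_assoc Φ Φᴴ Φ, hΦ, Matrix.one_mul]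
  have hherm : ∀ i j, G j i = starRingEnd ℂ (G i j) := by
    intro i j
    have h : Gᴴ = G := by rw [hG, conjTranspose_mul, conjTranspose_conjTranspose]
    conv_lhs => rw [← h]
    rfl
  have htrace : ∑ i, G i i = (N:ℂ) := by
    have h1 : Matrix.trace (Φᴴ * Φ) = Matrix.trace (Φ * Φᴴ) := Matrix.trace_mul_comm _ _
    rw [hΦ, Matrix.trace_one] at h1
    simpa [Matrix.trace, Matrix.diag, hG] using h1
  have hdiagre : ∑ i, (G i i).re = (N:ℝ) := by
    have := congrArg Complex.re htrace
    simpa [Complex.re_sum] using this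
  have hdiag_im : ∀ i, (G i i).im = 0 := by
    intro i
    have := hherm i i
    have h2 := congrArg Complex.im this
    simp at h2
    linarith
  -- Frobenius norm squared
  have h2 : ∑ i, ∑ j, Complex.normSq (G i j) = (N:ℝ) := by
    have hc : ∑ i, ∑ j, (Complex.normSq (G i j) : ℂ) = (N:ℂ) := by
      calc ∑ i, ∑ j, (Complex.normSq (G i j) : ℂ)
          = ∑ i, (G * G) i i := by
            refine Finset.sum_congr rfl fun i _ => ?_
            rw [Matrix.mul_apply]
            refine Finset.sum_congr rfl fun j _ => ?_
            rw [hherm i j, Complex.mul_conj]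
        _ = (N:ℂ) := by rw [hGmul]; exact htrace
    exact_mod_cast hc
  have hsplit : (∑ i, (G i i).re ^ 2)
      + ∑ i, ∑ j ∈ Finset.univ.erase i, ‖G i j‖ ^ 2 = (N:ℝ) := by
    rw [← h2]
    rw [← Finset.sum_add_distrib]
    refine Finset.sum_congr rfl fun i _ => ?_
    rw [← Finset.add_sum_erase Finset.univ (fun j => Complex.normSq (G i j)) (Finset.mem_univ i)]
    congr 1
    · rw [Complex.normSq_apply, hdiag_im i]; ring
    · exact Finset.sum_congr rfl fun j _ => Complex.sq_norm _
  -- counting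
  have hcard : ∀ i : Fin M, ((Finset.univ.erase i).card : ℝ) = (M:ℝ) - 1 := by
    intro i
    rw [Finset.card_erase_of_mem (Finset.mem_univ i), Finset.card_univ, Fintype.card_fin]
    push_cast [Nat.cast_sub hMposn]
    ring
  set c := welchConst N M with hc
  set t := (N:ℝ) / (M:ℝ) with ht
  have e1 : ∑ i, ((G i i).re - t) ^ 2
      = (∑ i, (G i i).re ^ 2) - 2 * t * (∑ i, (G i i).re) + (M:ℝ) * t ^ 2 := by
    have h : ∀ i : Fin M, ((G i i).re - t) ^ 2
        = (G i i).re ^ 2 - (2 * t) * (G i i).re + t ^ 2 := fun i => by ring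
    rw [Finset.sum_congr rfl fun i _ => h i, Finset.sum_add_distrib, Finset.sum_sub_distrib,
      Finset.sum_const, Finset.card_univ, Fintype.card_fin, ← Finset.mul_sum, nsmul_eq_mul]
  have e2 : ∑ i, ∑ j ∈ Finset.univ.erase i, (‖G i j‖ - c) ^ 2
      = (∑ i, ∑ j ∈ Finset.univ.erase i, ‖G i j‖ ^ 2)
        - 2 * c * (∑ i, ∑ j ∈ Finset.univ.erase i, ‖G i j‖)
        + (M:ℝ) * ((M:ℝ) - 1) * c ^ 2 := by
    have hterm : ∀ (i j : Fin M), (‖G i j‖ - c) ^ 2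
        = ‖G i j‖ ^ 2 - (2 * c) * ‖G i j‖ + c ^ 2 := fun i j => by ring
    have hrow : ∀ i : Fin M, ∑ j ∈ Finset.univ.erase i, (‖G i j‖ - c) ^ 2
        = (∑ j ∈ Finset.univ.erase i, ‖G i j‖ ^ 2)
          - (2 * c) * (∑ j ∈ Finset.univ.erase i, ‖G i j‖)
          + ((M:ℝ) - 1) * c ^ 2 := by
      intro i
      rw [Finset.sum_congr rfl fun j _ => hterm i j, Finset.sum_add_distrib,
        Finset.sum_sub_distrib, Finset.sum_const, ← Finset.mul_sum, nsmul_eq_mul, hcard i]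
    rw [Finset.sum_congr rfl fun i _ => hrow i, Finset.sum_add_distrib, Finset.sum_sub_distrib,
      Finset.sum_const, Finset.card_univ, Fintype.card_fin, ← Finset.mul_sum, nsmul_eq_mul]
    ring
  have hEAD : EAD Φ = (∑ i, ((G i i).re - t) ^ 2)
      + ∑ i, ∑ j ∈ Finset.univ.erase i, (‖G i j‖ - c) ^ 2 := rfl
  have hTC : totalCoherence Φ = ∑ i, ∑ j ∈ Finset.univ.erase i, ‖G i j‖ := rfl
  rw [hEAD, e1, e2, hdiagre, ← hTC]
  have hB : ∑ i, (G i i).re ^ 2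
      = (N:ℝ) - ∑ i, ∑ j ∈ Finset.univ.erase i, ‖G i j‖ ^ 2 := by
    linarith [hsplit]
  rw [hB, ht]
  field_simp
  ring

theorem EAD_formula {N M : ℕ} (hN : 0 < N) (hNM : N < M)
    (Φ : Matrix (Fin N) (Fin M) ℂ) (hΦ : Φ * Φᴴ = 1) :
    EAD Φ = (N : ℝ) - (N : ℝ) ^ 2 / (M : ℝ) +
        (M : ℝ) * ((M : ℝ) - 1) * (welchConst N M) ^ 2 -
        2 * welchConst N M * totalCoherence Φ ∧
      ((∀ Ψ : Matrix (Fin N) (Fin M) ℂ, Ψ * Ψᴴ = 1 → EAD Φ ≤ EAD Ψ) ↔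
        (∀ Ψ : Matrix (Fin N) (Fin M) ℂ, Ψ * Ψᴴ = 1 →
          totalCoherence Ψ ≤ totalCoherence Φ)) := by
  have key := EAD_eq_aux hN hNM Φ hΦ
  have hcpos : 0 < welchConst N M := by
    apply Real.sqrt_pos.mpr
    apply div_pos
    · have h1 : (0:ℝ) < (N:ℝ) := by exact_mod_cast hN
      have h2 : (N:ℝ) < (M:ℝ) := by exact_mod_cast hNM
      nlinarith
    · have h2 : (1:ℝ) < (M:ℝ) := by exact_mod_cast lt_of_le_of_lt hN hNM
      have h1 : (0:ℝ) < (M:ℝ)^2 := by nlinarith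
      have h3 : (0:ℝ) < (M:ℝ) - 1 := by linarith
      exact mul_pos h1 h3
  refine ⟨key, ?_⟩
  constructor
  · intro h Ψ hΨ
    have h1 := h Ψ hΨ
    rw [key, EAD_eq_aux hN hNM Ψ hΨ] at h1
    nlinarith
  · intro h Ψ hΨ
    have h1 := h Ψ hΨ
    rw [key, EAD_eq_aux hN hNM Ψ hΨ]
    nlinarith
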